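/- Let X and Z be nonnegative real-valued random variables with finite means μ_X and μ_Z, and let ε > 0. Then |E[X/(ε + X + Z)] − μ_X/(ε + μ_X + μ_Z)| ≤ ((ε + μ_Z)·E[|X − μ_X|] + μ_X·E[|Z − μ_Z|]) / ε². -/

import Mathlib

open MeasureTheory

theorem logit_expectation_bound
    {Ω : Type*} [MeasurableSpace Ω] (μ : Measure Ω) [IsProbabilityMeasure μ]
    (X Z : Ω → ℝ) (hX : Integrable X μ) (hZ : Integrable Z μ)
    (hXpos : ∀ᵐ ω ∂μ, 0 ≤ X ω) (hZpos : ∀ᵐ ω ∂μ, 0 ≤ Z ω)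
    (ε : ℝ) (hε : 0 < ε)
    (μX μZ : ℝ) (hμX : μX = ∫ ω, X ω ∂μ) (hμZ : μZ = ∫ ω, Z ω ∂μ) :
    |(∫ ω, X ω / (ε + X ω + Z ω) ∂μ) - μX / (ε + μX + μZ)|
      ≤ ((ε + μZ) * (∫ ω, |X ω - μX| ∂μ) + μX * (∫ ω, |Z ω - μZ| ∂μ)) / ε ^ 2 := by
  have hμX0 : 0 ≤ μX := hμX ▸ integral_nonneg_of_ae hXpos
  have hμZ0 : 0 ≤ μZ := hμZ ▸ integral_nonneg_of_ae hZpos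
  set b : ℝ := ε + μX + μZ with hb
  have hbpos : 0 < b := by positivity
  have hf_meas : AEStronglyMeasurable (fun ω => X ω / (ε + X ω + Z ω)) μ :=
    (hX.1.aemeasurable.div
      ((aemeasurable_const.add hX.1.aemeasurable).add hZ.1.aemeasurable)).aestronglyMeasurable
  have hfint : Integrable (fun ω => X ω / (ε + X ω + Z ω)) μ := by
    refine (integrable_const (1 : ℝ)).mono' hf_meas ?_
    filter_upwards [hXpos, hZpos] with ω hx hz
    have ha : 0 < ε + X ω + Z ω := by linarith
    rw [Real.norm_eq_abs, abs_of_nonneg (div_nonneg hx ha.le)]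
    exact div_le_one_of_le₀ (by linarith) ha.le
  have hX' : Integrable (fun ω => |X ω - μX|) μ := (hX.sub (integrable_const μX)).abs
  have hZ' : Integrable (fun ω => |Z ω - μZ|) μ := (hZ.sub (integrable_const μZ)).abs
  have hgint : Integrable
      (fun ω => ((ε + μZ) * |X ω - μX| + μX * |Z ω - μZ|) / ε ^ 2) μ :=
    ((hX'.const_mul _).add (hZ'.const_mul _)).div_const _
  have hsub : Integrable (fun ω => X ω / (ε + X ω + Z ω) - μX / b) μ :=
    hfint.sub (integrable_const _)
  have key : ∀ᵐ ω ∂μ, |X ω / (ε + X ω + Z ω) - μX / b|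
      ≤ ((ε + μZ) * |X ω - μX| + μX * |Z ω - μZ|) / ε ^ 2 := by
    filter_upwards [hXpos, hZpos] with ω hx hz
    have ha : 0 < ε + X ω + Z ω := by linarith
    have hab : 0 < (ε + X ω + Z ω) * b := mul_pos ha hbpos
    have hkey : X ω / (ε + X ω + Z ω) - μX / b
        = ((ε + μZ) * (X ω - μX) + μX * (μZ - Z ω)) / ((ε + X ω + Z ω) * b) := by
      field_simp
      ring
    rw [hkey, abs_div, abs_of_pos hab]
    have hnum : |(ε + μZ) * (X ω - μX) + μX * (μZ - Z ω)|
        ≤ (ε + μZ) * |X ω - μX| + μX * |Z ω - μZ| := by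
      calc |(ε + μZ) * (X ω - μX) + μX * (μZ - Z ω)|
          ≤ |(ε + μZ) * (X ω - μX)| + |μX * (μZ - Z ω)| := abs_add_le _ _
        _ = (ε + μZ) * |X ω - μX| + μX * |Z ω - μZ| := by
            rw [abs_mul, abs_mul, abs_of_nonneg (by linarith : (0:ℝ) ≤ ε + μZ),
              abs_of_nonneg hμX0, abs_sub_comm (μZ) (Z ω)]
    have hden : ε ^ 2 ≤ (ε + X ω + Z ω) * b := by
      have h1 : ε ≤ ε + X ω + Z ω := by linarith
      have h2 : ε ≤ b := by rw [hb]; linarith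
      calc ε ^ 2 = ε * ε := sq ε
        _ ≤ (ε + X ω + Z ω) * b := mul_le_mul h1 h2 hε.le (by linarith)
    exact div_le_div₀ (by positivity) hnum (by positivity) hden
  calc |(∫ ω, X ω / (ε + X ω + Z ω) ∂μ) - μX / b|
      = |∫ ω, (X ω / (ε + X ω + Z ω) - μX / b) ∂μ| := by
        rw [integral_sub hfint (integrable_const _), integral_const, probReal_univ,
          one_smul]
    _ ≤ ∫ ω, |X ω / (ε + X ω + Z ω) - μX / b| ∂μ := by
        simpa [Real.norm_eq_abs] using
          norm_integral_le_integral_norm (fun ω => X ω / (ε + X ω + Z ω) - μX / b)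
    _ ≤ ∫ ω, ((ε + μZ) * |X ω - μX| + μX * |Z ω - μZ|) / ε ^ 2 ∂μ :=
        integral_mono_ae hsub.abs hgint key
    _ = ((ε + μZ) * (∫ ω, |X ω - μX| ∂μ) + μX * (∫ ω, |Z ω - μZ| ∂μ)) / ε ^ 2 := by
        rw [integral_div, integral_add (hX'.const_mul _) (hZ'.const_mul _),
          integral_const_mul, integral_const_mul]
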